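/- Let P ∈ ℝ^{n×k}, Q ∈ ℝ^{m×k} with Ȳ = PQᵀ (target set). Then the Hessian of the loss, given by the block matrix H = −[[QᵀQ ⊗ I_n, Qᵀ ⊗ P·K_{mk}],[Pᵀ ⊗ Q·K_{nk}, PᵀP ⊗ I_m]], is negative semidefinite, its nonzero eigenvalues are −(σ_i(Q)² + σ_j(P)²) and −σ_i(Q)² for the nonzero singular values σ_i(Q), σ_j(P), and its kernel has dimension (m+n)k − mn when rank(PQᵀ) = m (i.e., exactly mn negative eigenvalues counted with multiplicity). -/

import Mathlib

open Matrix Kronecker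

/-- The commutation (vec-permutation) matrix `K_{pq}` satisfying
`vec(Mᵀ) = K_{pq} · vec(M)` for `M ∈ ℝ^{p×q}`, where `vec(M)` is indexed by
pairs (column, row). -/
def Kcomm (p q : ℕ) : Matrix (Fin p × Fin q) (Fin q × Fin p) ℝ :=
  fun a b => if a.1 = b.2 ∧ a.2 = b.1 then 1 else 0

/-- The Hessian of the loss at a point of the target set:
`H = −[[QᵀQ ⊗ I_n, Qᵀ ⊗ P·K_{mk}],[Pᵀ ⊗ Q·K_{nk}, PᵀP ⊗ I_m]]`. -/
noncomputable def hessH {n m k : ℕ}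
    (P : Matrix (Fin n) (Fin k) ℝ) (Q : Matrix (Fin m) (Fin k) ℝ) :
    Matrix ((Fin k × Fin n) ⊕ (Fin k × Fin m)) ((Fin k × Fin n) ⊕ (Fin k × Fin m)) ℝ :=
  -(Matrix.fromBlocks
      ((Qᵀ * Q) ⊗ₖ (1 : Matrix (Fin n) (Fin n) ℝ)) ((Qᵀ ⊗ₖ P) * Kcomm m k)
      ((Pᵀ ⊗ₖ Q) * Kcomm n k) ((Pᵀ * P) ⊗ₖ (1 : Matrix (Fin m) (Fin m) ℝ)))

namespace Stmt18Aux

variable {n m k : ℕ}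

def Mmat (P : Matrix (Fin n) (Fin k) ℝ) (Q : Matrix (Fin m) (Fin k) ℝ) :
    Matrix (Fin m × Fin n) ((Fin k × Fin n) ⊕ (Fin k × Fin m)) ℝ :=
  Matrix.of fun li s =>
    Sum.elim (fun aj => if li.2 = aj.2 then Q li.1 aj.1 else 0)
             (fun al => if li.1 = al.2 then P li.2 al.1 else 0) s

lemma hessH_eq (P : Matrix (Fin n) (Fin k) ℝ) (Q : Matrix (Fin m) (Fin k) ℝ) :
    hessH P Q = -((Mmat P Q)ᵀ * Mmat P Q) := by
  unfold hessH Mmat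
  congr 1
  ext (⟨a,j⟩|⟨a,l⟩) (⟨b,j'⟩|⟨b,l'⟩) <;>
    simp [Matrix.mul_apply, kroneckerMap_apply, Fintype.sum_prod_type, ite_and, Kcomm,
      Matrix.one_apply, mul_ite, ite_mul, Finset.sum_ite_eq, Finset.sum_ite_eq',
      Finset.mul_sum, Finset.sum_mul, mul_comm, eq_comm]

lemma MMt_eq (P : Matrix (Fin n) (Fin k) ℝ) (Q : Matrix (Fin m) (Fin k) ℝ) :
    Mmat P Q * (Mmat P Q)ᵀ
      = (Q * Qᵀ) ⊗ₖ (1 : Matrix (Fin n) (Fin n) ℝ)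
        + (1 : Matrix (Fin m) (Fin m) ℝ) ⊗ₖ (P * Pᵀ) := by
  unfold Mmat
  ext ⟨l,i⟩ ⟨l',i'⟩
  simp [Matrix.mul_apply, kroneckerMap_apply, Fintype.sum_prod_type, ite_and,
    Matrix.one_apply, mul_ite, ite_mul, Finset.sum_ite_eq, Finset.sum_ite_eq',
    mul_comm, eq_comm]

lemma ortho_zero {N : ℕ} (b : OrthonormalBasis (Fin N) ℝ (EuclideanSpace ℝ (Fin N)))
    (g : Fin N → ℝ) (h : ∀ i, (∑ j, b i j * g j) = 0) : g = 0 := by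
  have hg : ∀ i, b.repr (WithLp.toLp 2 g : EuclideanSpace ℝ (Fin N)) i = 0 := by
    intro i; rw [OrthonormalBasis.repr_apply_apply]
    simpa [PiLp.inner_apply, RCLike.inner_apply, conj_trivial, mul_comm] using h i
  have h0 : (WithLp.toLp 2 g : EuclideanSpace ℝ (Fin N)) = 0 := by
    apply b.repr.injective; ext i; simp [hg i]
  exact congrArg WithLp.ofLp h0

lemma rank_neg {α β : Type*} [Fintype β] (A : Matrix α β ℝ) : (-A).rank = A.rank := by
  have h1 : (-A).mulVecLin = -(A.mulVecLin) := by
    ext v i; simp [Matrix.neg_mulVec]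
  have h2 : LinearMap.range (-A).mulVecLin = LinearMap.range A.mulVecLin := by
    rw [h1, LinearMap.range_neg]
  unfold Matrix.rank
  rw [h2]

lemma symm_entry {N : ℕ} (R : Matrix (Fin N) (Fin k) ℝ) (i j : Fin N) :
    (R * Rᵀ) i j = (R * Rᵀ) j i := by
  simp [Matrix.mul_apply, mul_comm]

end Stmt18Aux

open Stmt18Aux in
theorem stmt18 {n m k : ℕ} (Y : Matrix (Fin n) (Fin m) ℝ)
    (P : Matrix (Fin n) (Fin k) ℝ) (Q : Matrix (Fin m) (Fin k) ℝ)
    (htarget : Y = P * Qᵀ) :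
    -- H is negative semidefinite:
    (-(hessH P Q)).PosSemidef ∧
    -- every nonzero eigenvalue of H is of the form −σᵢ(Q)² or −(σᵢ(Q)² + σⱼ(P)²),
    -- where σᵢ(Q)², σⱼ(P)² are (nonzero) eigenvalues of QQᵀ and PPᵀ:
    (∀ μ : ℝ, (∃ x : ((Fin k × Fin n) ⊕ (Fin k × Fin m)) → ℝ,
        x ≠ 0 ∧ hessH P Q *ᵥ x = μ • x) → μ ≠ 0 →
      ∃ a : ℝ, (∃ u : Fin m → ℝ, u ≠ 0 ∧ (Q * Qᵀ) *ᵥ u = a • u) ∧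
        (μ = -a ∨ ∃ c : ℝ, (∃ w : Fin n → ℝ, w ≠ 0 ∧ (P * Pᵀ) *ᵥ w = c • w) ∧
          μ = -(a + c))) ∧
    -- the kernel of H has dimension (m+n)k − mn when rank(PQᵀ) = m:
    ((P * Qᵀ).rank = m → (hessH P Q).rank = m * n) := by
  set M := Mmat P Q with hM
  refine ⟨?_, ?_, ?_⟩
  · -- PosSemidef
    rw [hessH_eq, neg_neg]
    have := Matrix.posSemidef_conjTranspose_mul_self M
    rwa [Matrix.conjTranspose_eq_transpose_of_trivial] at this
  · -- eigenvalues
    rintro μ ⟨x, hx0, hx⟩ hμ0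
    rw [hessH_eq, Matrix.neg_mulVec, neg_eq_iff_eq_neg, ← neg_smul] at hx
    -- hx : (Mᵀ * M) *ᵥ x = (-μ) • x
    set v : Fin m × Fin n → ℝ := M *ᵥ x with hvdef
    have hv : ((Q * Qᵀ) ⊗ₖ (1 : Matrix (Fin n) (Fin n) ℝ)
        + (1 : Matrix (Fin m) (Fin m) ℝ) ⊗ₖ (P * Pᵀ)) *ᵥ v = (-μ) • v := by
      rw [← MMt_eq, hvdef, Matrix.mulVec_mulVec, Matrix.mul_assoc,
        ← Matrix.mulVec_mulVec, hx, Matrix.mulVec_smul]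
    have hv0 : v ≠ 0 := by
      intro h
      apply hx0
      have hx' : (-μ) • x = Mᵀ *ᵥ v := by
        rw [← hx, hvdef, Matrix.mulVec_mulVec]
      rw [h, Matrix.mulVec_zero] at hx'
      have := smul_eq_zero.mp hx'
      rcases this with h1 | h1
      · exact absurd (neg_eq_zero.mp h1) hμ0
      · exact h1
    have hstar : ∀ l' i',
        (∑ l'', (Q * Qᵀ) l' l'' * v (l'', i'))
          + (∑ i'', (P * Pᵀ) i' i'' * v (l', i'')) = (-μ) * v (l', i') := by
      intro l' i'
      have := congrFun hv (l', i')
      simpa [Matrix.mulVec, dotProduct, Fintype.sum_prod_type, Matrix.one_apply,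
        add_mul, mul_ite, ite_mul, Finset.sum_ite_eq, Finset.sum_ite_eq',
        Finset.sum_add_distrib, kroneckerMap_apply] using this
    -- spectral data
    have hQh : (Q * Qᵀ).IsHermitian := by
      have := Matrix.isHermitian_mul_conjTranspose_self Q
      rwa [Matrix.conjTranspose_eq_transpose_of_trivial] at this
    have hPh : (P * Pᵀ).IsHermitian := by
      have := Matrix.isHermitian_mul_conjTranspose_self P
      rwa [Matrix.conjTranspose_eq_transpose_of_trivial] at this
    set u : Fin m → Fin m → ℝ := fun l j => hQh.eigenvectorBasis l j with hudef
    set w : Fin n → Fin n → ℝ := fun i j => hPh.eigenvectorBasis i j with hwdef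
    set a : Fin m → ℝ := hQh.eigenvalues with hadef
    set c : Fin n → ℝ := hPh.eigenvalues with hcdef
    have hu : ∀ l, (Q * Qᵀ) *ᵥ u l = a l • u l := fun l => by
      simpa using hQh.mulVec_eigenvectorBasis l
    have hw : ∀ i, (P * Pᵀ) *ᵥ w i = c i • w i := fun i => by
      simpa using hPh.mulVec_eigenvectorBasis i
    have hu' : ∀ l l'', a l * u l l'' = ∑ l', (Q * Qᵀ) l'' l' * u l l' := by
      intro l l''
      have := congrFun (hu l) l''
      simpa [Matrix.mulVec, dotProduct] using this.symm
    have hw' : ∀ i i'', c i * w i i'' = ∑ i', (P * Pᵀ) i'' i' * w i i' := by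
      intro i i''
      have := congrFun (hw i) i''
      simpa [Matrix.mulVec, dotProduct] using this.symm
    set z : Fin m → Fin n → ℝ := fun l i' => ∑ l', u l l' * v (l', i') with hzdef
    have hz : ∀ l i', a l * z l i' + (∑ i'', (P * Pᵀ) i' i'' * z l i'')
        = (-μ) * z l i' := by
      intro l i'
      have e1 : a l * z l i' = ∑ l', u l l' * (∑ l'', (Q * Qᵀ) l' l'' * v (l'', i')) := by
        symm
        calc ∑ l', u l l' * (∑ l'', (Q * Qᵀ) l' l'' * v (l'', i'))
            = ∑ l', ∑ l'', u l l' * (Q * Qᵀ) l' l'' * v (l'', i') := by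
              refine Finset.sum_congr rfl fun l' _ => ?_
              rw [Finset.mul_sum]
              exact Finset.sum_congr rfl fun l'' _ => by ring
          _ = ∑ l'', ∑ l', u l l' * (Q * Qᵀ) l' l'' * v (l'', i') := Finset.sum_comm
          _ = ∑ l'', (a l * u l l'') * v (l'', i') := by
              refine Finset.sum_congr rfl fun l'' _ => ?_
              rw [← Finset.sum_mul]
              congr 1
              rw [hu' l l'']
              exact Finset.sum_congr rfl fun l' _ => by rw [symm_entry Q l'' l']; ring
          _ = a l * z l i' := by
              simp only [hzdef, Finset.mul_sum]
              exact Finset.sum_congr rfl fun l' _ => by ring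
      have e2 : (∑ i'', (P * Pᵀ) i' i'' * z l i'')
          = ∑ l', u l l' * (∑ i'', (P * Pᵀ) i' i'' * v (l', i'')) := by
        calc ∑ i'', (P * Pᵀ) i' i'' * z l i''
            = ∑ i'', ∑ l', (P * Pᵀ) i' i'' * (u l l' * v (l', i'')) := by
              simp only [hzdef]
              exact Finset.sum_congr rfl fun i'' _ => by rw [Finset.mul_sum]
          _ = ∑ l', ∑ i'', (P * Pᵀ) i' i'' * (u l l' * v (l', i'')) := Finset.sum_comm
          _ = ∑ l', u l l' * (∑ i'', (P * Pᵀ) i' i'' * v (l', i'')) := by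
              refine Finset.sum_congr rfl fun l' _ => ?_
              rw [Finset.mul_sum]
              exact Finset.sum_congr rfl fun i'' _ => by ring
      rw [e1, e2, ← Finset.sum_add_distrib]
      calc (∑ l', (u l l' * (∑ l'', (Q * Qᵀ) l' l'' * v (l'', i'))
              + u l l' * (∑ i'', (P * Pᵀ) i' i'' * v (l', i''))))
          = ∑ l', u l l' * ((-μ) * v (l', i')) := by
            refine Finset.sum_congr rfl fun l' _ => ?_
            rw [← mul_add, hstar l' i']
        _ = (-μ) * z l i' := by
            simp only [hzdef, Finset.mul_sum]
            exact Finset.sum_congr rfl fun l' _ => by ring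
    set t : Fin m → Fin n → ℝ := fun l i => ∑ i', w i i' * z l i' with htdef
    have ht : ∀ l i, (a l + c i) * t l i = (-μ) * t l i := by
      intro l i
      have e3 : c i * t l i = ∑ i', w i i' * (∑ i'', (P * Pᵀ) i' i'' * z l i'') := by
        symm
        calc ∑ i', w i i' * (∑ i'', (P * Pᵀ) i' i'' * z l i'')
            = ∑ i', ∑ i'', w i i' * (P * Pᵀ) i' i'' * z l i'' := by
              refine Finset.sum_congr rfl fun i' _ => ?_
              rw [Finset.mul_sum]
              exact Finset.sum_congr rfl fun i'' _ => by ring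
          _ = ∑ i'', ∑ i', w i i' * (P * Pᵀ) i' i'' * z l i'' := Finset.sum_comm
          _ = ∑ i'', (c i * w i i'') * z l i'' := by
              refine Finset.sum_congr rfl fun i'' _ => ?_
              rw [← Finset.sum_mul]
              congr 1
              rw [hw' i i'']
              exact Finset.sum_congr rfl fun i' _ => by rw [symm_entry P i'' i']; ring
          _ = c i * t l i := by
              simp only [htdef, Finset.mul_sum]
              exact Finset.sum_congr rfl fun i' _ => by ring
      have e4 : a l * t l i = ∑ i', w i i' * (a l * z l i') := by
        simp only [htdef, Finset.mul_sum]
        exact Finset.sum_congr rfl fun i' _ => by ring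
      calc (a l + c i) * t l i = a l * t l i + c i * t l i := by ring
        _ = ∑ i', w i i' * (a l * z l i' + (∑ i'', (P * Pᵀ) i' i'' * z l i'')) := by
            rw [e3, e4, ← Finset.sum_add_distrib]
            exact Finset.sum_congr rfl fun i' _ => by ring
        _ = ∑ i', w i i' * ((-μ) * z l i') := by
            exact Finset.sum_congr rfl fun i' _ => by rw [hz l i']
        _ = (-μ) * t l i := by
            simp only [htdef, Finset.mul_sum]
            exact Finset.sum_congr rfl fun i' _ => by ring
    have hex : ∃ l i, t l i ≠ 0 := by
      by_contra hcon
      push_neg at hcon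
      apply hv0
      have hz0 : ∀ l, z l = 0 := by
        intro l
        exact ortho_zero hPh.eigenvectorBasis (z l) (fun i => hcon l i)
      have hv' : ∀ i', (fun l'' => v (l'', i')) = 0 := by
        intro i'
        exact ortho_zero hQh.eigenvectorBasis _ (fun l => congrFun (hz0 l) i')
      funext p
      obtain ⟨l', i'⟩ := p
      exact congrFun (hv' i') l'
    obtain ⟨l, i, htne⟩ := hex
    have hval : a l + c i = -μ := by
      have := ht l i
      exact mul_right_cancel₀ htne this
    refine ⟨a l, ⟨u l, ?_, hu l⟩, Or.inr ⟨c i, ⟨w i, ?_, hw i⟩, by linarith⟩⟩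
    · have hne := hQh.eigenvectorBasis.orthonormal.ne_zero l
      intro h; apply hne; ext j; exact congrFun h j
    · have hne := hPh.eigenvectorBasis.orthonormal.ne_zero i
      intro h; apply hne; ext j; exact congrFun h j
  · -- rank
    intro hr
    have hQrank : Q.rank = m := by
      refine le_antisymm (Q.rank_le_card_height.trans_eq (Fintype.card_fin m)) ?_
      calc m = (P * Qᵀ).rank := hr.symm
        _ ≤ Qᵀ.rank := Matrix.rank_mul_le_right P Qᵀ
        _ = Q.rank := Matrix.rank_transpose Q
    -- Qᵀ.mulVecLin injective
    have hQinj : Function.Injective Qᵀ.mulVecLin := by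
      rw [← LinearMap.ker_eq_bot]
      have hrn := Qᵀ.mulVecLin.finrank_range_add_finrank_ker
      rw [show Module.finrank ℝ (LinearMap.range Qᵀ.mulVecLin) = Qᵀ.rank from rfl,
        Matrix.rank_transpose, hQrank, Module.finrank_fintype_fun_eq_card,
        Fintype.card_fin] at hrn
      have : Module.finrank ℝ (LinearMap.ker Qᵀ.mulVecLin) = 0 := by omega
      exact Submodule.finrank_eq_zero.mp this
    have hMinj : Function.Injective Mᵀ.mulVecLin := by
      rw [injective_iff_map_eq_zero]
      intro v hv
      funext p
      obtain ⟨l, j⟩ := p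
      have hrow : ∀ aidx, ∑ l', Q l' aidx * v (l', j) = 0 := by
        intro aidx
        have h := congrFun hv (Sum.inl (aidx, j))
        simpa [hM, Mmat, Matrix.mulVecLin_apply, Matrix.mulVec, dotProduct,
          Matrix.transpose_apply, Fintype.sum_prod_type, ite_mul, mul_ite,
          Finset.sum_ite_eq, Finset.sum_ite_eq', Matrix.vecMul, eq_comm, mul_comm] using h
      have hQr : Qᵀ *ᵥ (fun l' => v (l', j)) = 0 := by
        funext aidx
        simpa [Matrix.mulVec, dotProduct, Matrix.transpose_apply] using hrow aidx
      have hr0 : (fun l' => v (l', j)) = 0 := by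
        apply hQinj
        show Qᵀ.mulVecLin _ = Qᵀ.mulVecLin 0
        rw [Matrix.mulVecLin_apply, Matrix.mulVecLin_apply, hQr, Matrix.mulVec_zero]
      exact congrFun hr0 l

    have hrankMt : Mᵀ.rank = m * n := by
      unfold Matrix.rank
      rw [LinearMap.finrank_range_of_inj hMinj, Module.finrank_fintype_fun_eq_card,
        Fintype.card_prod, Fintype.card_fin, Fintype.card_fin]
    rw [hessH_eq, rank_neg, Matrix.rank_transpose_mul_self, ← Matrix.rank_transpose, hrankMt]
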